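/- arXiv:1607.07530 — 4 statements merged into one kernel-verified Lean document; each statement's English description precedes it below -/
import Mathlib

section
/- Uniqueness of the resonance pair: fix n ≥ 1, λ : {1,…,n} → ℤ_{≥0} nonzero with i₀ = max supp(λ), and integers r, k with k > 0. Define r_i = r_{i₀} − 2·Σ_{j=i}^{i₀−1} λ(j) + i − i₀ for i ∈ supp(λ), where r_{i₀} = 1 − λ(i₀). Suppose (p, k') and (p', k'') are pairs with p, p' ∈ supp(λ), 1 ≤ k' ≤ λ(p), 1 ≤ k'' ≤ λ(p'), satisfying r + 2k + n − p + 2 = r_p + 2k' and r + 2k + n − p' + 2 = r_{p'} + 2k''. Then p = p' and k' = k''. -/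
/-- `r_i = r_{i₀} − 2·Σ_{j=i}^{i₀−1} λ(j) + i − i₀`, where `r_{i₀} = 1 − λ(i₀)`. -/
def rfun (lam : ℕ → ℕ) (i0 i : ℕ) : ℤ :=
  (1 - (lam i0 : ℤ)) - 2 * (∑ j ∈ Finset.Icc i (i0 - 1), (lam j : ℤ)) + (i : ℤ) - (i0 : ℤ)

lemma rfun_key (lam : ℕ → ℕ) (i0 p p' : ℕ) (hpp' : p < p') (hp'i0 : p' ≤ i0) :
    rfun lam i0 p + 2 * (lam p : ℤ) + ((p' : ℤ) - p) ≤ rfun lam i0 p' := by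
  have h1 : 1 ≤ i0 := le_trans (Nat.one_le_of_lt (lt_of_lt_of_le hpp' hp'i0)) le_rfl
  have hIcc : ∀ i : ℕ, Finset.Icc i (i0 - 1) = Finset.Ico i i0 := by
    intro i
    ext j
    simp only [Finset.mem_Icc, Finset.mem_Ico]
    omega
  have hsplit : (∑ j ∈ Finset.Ico p p', (lam j : ℤ)) + ∑ j ∈ Finset.Ico p' i0, (lam j : ℤ)
      = ∑ j ∈ Finset.Ico p i0, (lam j : ℤ) :=
    Finset.sum_Ico_consecutive _ hpp'.le hp'i0
  have hmem : p ∈ Finset.Ico p p' := Finset.mem_Ico.mpr ⟨le_rfl, hpp'⟩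
  have hle : (lam p : ℤ) ≤ ∑ j ∈ Finset.Ico p p', (lam j : ℤ) :=
    Finset.single_le_sum (f := fun j => (lam j : ℤ)) (fun j _ => by positivity) hmem
  simp only [rfun, hIcc]
  linarith

/-- Uniqueness of the resonance pair: if `(p,k')` and `(p',k'')` both satisfy
`r + 2k + n − p + 2 = r_p + 2k'` with `p ∈ supp(λ)` and `1 ≤ k' ≤ λ(p)`, then
`p = p'` and `k' = k''`. -/
theorem stmt_11 (n : ℕ) (hn : 1 ≤ n) (lam : ℕ → ℕ) (i0 : ℕ) (hi0n : i0 ≤ n)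
    (hi0 : lam i0 ≠ 0) (hmax : ∀ i, i0 < i → lam i = 0)
    (r k : ℤ) (hk : 0 < k)
    (p p' : ℕ) (k' k'' : ℕ)
    (hp1 : 1 ≤ p) (hp : lam p ≠ 0) (hp1' : 1 ≤ p') (hp' : lam p' ≠ 0)
    (hk'1 : 1 ≤ k') (hk'2 : k' ≤ lam p) (hk''1 : 1 ≤ k'') (hk''2 : k'' ≤ lam p')
    (he1 : r + 2 * k + (n : ℤ) - (p : ℤ) + 2 = rfun lam i0 p + 2 * (k' : ℤ))
    (he2 : r + 2 * k + (n : ℤ) - (p' : ℤ) + 2 = rfun lam i0 p' + 2 * (k'' : ℤ)) :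
    p = p' ∧ k' = k'' := by
  have hpi0 : p ≤ i0 := by by_contra h; exact hp (hmax p (by omega))
  have hp'i0 : p' ≤ i0 := by by_contra h; exact hp' (hmax p' (by omega))
  have hcast1 : (k' : ℤ) ≤ (lam p : ℤ) := Int.ofNat_le.mpr hk'2
  have hcast2 : (k'' : ℤ) ≤ (lam p' : ℤ) := Int.ofNat_le.mpr hk''2
  have hcast3 : (1 : ℤ) ≤ (k' : ℤ) := by exact_mod_cast hk'1
  have hcast4 : (1 : ℤ) ≤ (k'' : ℤ) := by exact_mod_cast hk''1
  have hpc : (p : ℤ) < (p' : ℤ) → False := by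
    intro h
    have hlt : p < p' := by exact_mod_cast h
    have := rfun_key lam i0 p p' hlt hp'i0
    linarith
  have hpc' : (p' : ℤ) < (p : ℤ) → False := by
    intro h
    have hlt : p' < p := by exact_mod_cast h
    have := rfun_key lam i0 p' p hlt hpi0
    linarith
  have hpp : p = p' := by
    rcases lt_trichotomy (p : ℤ) (p' : ℤ) with h | h | h
    · exact absurd h (fun h => hpc h)
    · exact_mod_cast h
    · exact absurd h (fun h => hpc' h)
  subst hpp
  refine ⟨rfl, ?_⟩
  have : (k' : ℤ) = (k'' : ℤ) := by linarith
  exact_mod_cast this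
end

section
/- Gap lemma: let T : {1,…,k} → {1,…,n+1} be a strictly increasing column tableau with shape (k,s), and suppose T(j) = l₁ and T(j+1) = l₂ with 1 ≤ l₁ < l₂ − 1 ≤ n for some 1 ≤ j ≤ k−1. Then in the element ω^T = ∏_{m=1}^{k} Y_{T(m)−1, s+2(k−m)+T(m)}^{-1}·Y_{T(m), s+2(k−m)+T(m)−1} of the free abelian group 𝒫_ℤ, the generator Y_{l₁, s+2(k−j)+l₁−1} occurs with positive exponent and the generator Y_{l₂−1, s+2(k−j−1)+l₂} occurs with negative exponent. -/
/-- `Y_{i,t}` in the free abelian group `𝒫_ℤ` on the symbols `Y_{i,t}`, `1 ≤ i ≤ n`,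
`t ∈ ℤ`, with the convention `Y_{0,t} = Y_{n+1,t} = 1` (here `0`). -/
noncomputable def Ysym (n : ℕ) (i : ℕ) (t : ℤ) : (ℕ × ℤ) →₀ ℤ :=
  if 1 ≤ i ∧ i ≤ n then Finsupp.single (i, t) 1 else 0

/-- The box `⟦i⟧_a = Y_{i-1,a+i}^{-1} · Y_{i,a+i-1}`, written additively. -/
noncomputable def boxWt (n : ℕ) (i : ℕ) (a : ℤ) : (ℕ × ℤ) →₀ ℤ :=
  Ysym n i (a + i - 1) - Ysym n (i - 1) (a + i)

/-- `ω^T` for a column tableau `T` of length `k` with support starting at `s`. -/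
noncomputable def colWt (n k : ℕ) (s : ℤ) (T : ℕ → ℕ) : (ℕ × ℤ) →₀ ℤ :=
  ∑ j ∈ Finset.Icc 1 k, boxWt n (T j) (s + 2 * ((k : ℤ) - (j : ℤ)))

lemma Ysym_apply (n i : ℕ) (t : ℤ) (p : ℕ) (u : ℤ) :
    Ysym n i t (p, u) = if 1 ≤ i ∧ i ≤ n ∧ p = i ∧ u = t then 1 else 0 := by
  unfold Ysym
  split_ifs with h1 h2 h3
  · simp only [Finsupp.single_apply, Prod.mk.injEq]
    rw [if_pos ⟨h2.2.2.1.symm, h2.2.2.2.symm⟩]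
  · simp only [Finsupp.single_apply, Prod.mk.injEq]
    rw [if_neg]
    rintro ⟨hp, hu⟩; exact h2 ⟨h1.1, h1.2, hp.symm, hu.symm⟩
  · exact absurd ⟨h3.1, h3.2.1⟩ h1
  · simp

lemma box_apply (n i : ℕ) (a : ℤ) (p : ℕ) (u : ℤ) :
    boxWt n i a (p, u) =
      (if 1 ≤ i ∧ i ≤ n ∧ p = i ∧ u = a + i - 1 then 1 else 0)
      - (if 1 ≤ i - 1 ∧ i - 1 ≤ n ∧ p = i - 1 ∧ u = a + i then 1 else 0) := by
  simp [boxWt, Ysym_apply]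

lemma colWt_apply (n k : ℕ) (s : ℤ) (T : ℕ → ℕ) (p : ℕ) (u : ℤ) :
    colWt n k s T (p, u)
      = ∑ m ∈ Finset.Icc 1 k, boxWt n (T m) (s + 2 * ((k : ℤ) - (m : ℤ))) (p, u) := by
  simp [colWt, Finsupp.finset_sum_apply]

/-- Gap lemma: if a strictly increasing column tableau `T` of shape `(k,s)` has
`T(j) = l₁` and `T(j+1) = l₂` with `1 ≤ l₁ < l₂ − 1 ≤ n`, then in `ω^T` the generator
`Y_{l₁, s+2(k−j)+l₁−1}` occurs with positive exponent and the generator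
`Y_{l₂−1, s+2(k−j−1)+l₂}` occurs with negative exponent. -/
theorem stmt_15 (n k : ℕ) (s : ℤ) (T : ℕ → ℕ) (j l1 l2 : ℕ)
    (hrange : ∀ m, 1 ≤ m → m ≤ k → 1 ≤ T m ∧ T m ≤ n + 1)
    (hmono : ∀ m m', 1 ≤ m → m < m' → m' ≤ k → T m < T m')
    (hj : 1 ≤ j) (hjk : j + 1 ≤ k) (hTj : T j = l1) (hTj1 : T (j + 1) = l2)
    (hl1 : 1 ≤ l1) (hgap : l1 + 1 < l2) (hl2 : l2 - 1 ≤ n) :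
    0 < colWt n k s T (l1, s + 2 * ((k : ℤ) - (j : ℤ)) + (l1 : ℤ) - 1) ∧
    colWt n k s T (l2 - 1, s + 2 * ((k : ℤ) - (j : ℤ) - 1) + (l2 : ℤ)) < 0 := by
  have hinj : ∀ m m', 1 ≤ m → m ≤ k → 1 ≤ m' → m' ≤ k → T m = T m' → m = m' := by
    intro m m' h1 h2 h3 h4 he
    rcases lt_trichotomy m m' with h | h | h
    · exact absurd (hmono m m' h1 h h4) (by omega)
    · exact h
    · exact absurd (hmono m' m h3 h h2) (by omega)
  constructor
  · rw [colWt_apply]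
    rw [Finset.sum_eq_single_of_mem j (by simp; omega)]
    · rw [box_apply, hTj]
      rw [if_pos ⟨hl1, by omega, rfl, by push_cast; ring⟩, if_neg]
      · norm_num
      · rintro ⟨ha, hb, hc, hd⟩; omega
    · intro m hm hne
      simp only [Finset.mem_Icc] at hm
      rw [box_apply]
      rw [if_neg, if_neg]
      · simp
      · rintro ⟨ha, hb, hc, hd⟩
        -- l1 = T m - 1, so T m = l1 + 1, and times match force m = j + 1
        have hTm : T m = l1 + 1 := by omega
        have hm' : m = j + 1 := by omega
        rw [hm', hTj1] at hTm; omega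
      · rintro ⟨ha, hb, hc, hd⟩
        exact hne (hinj m j hm.1 hm.2 hj (by omega) (by rw [hTj, hc]))
  · rw [colWt_apply]
    rw [Finset.sum_eq_single_of_mem (j + 1) (by simp; omega)]
    · rw [box_apply, hTj1]
      rw [if_neg, if_pos ⟨by omega, hl2, rfl, by push_cast [Nat.cast_sub (by omega : 1 ≤ l2)]; ring⟩]
      · norm_num
      · rintro ⟨ha, hb, hc, hd⟩; omega
    · intro m hm hne
      simp only [Finset.mem_Icc] at hm
      rw [box_apply]
      rw [if_neg, if_neg]
      · simp
      · rintro ⟨ha, hb, hc, hd⟩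
        have hm' : m = j + 1 := by omega
        exact hne hm'
      · rintro ⟨ha, hb, hc, hd⟩
        -- T m = l2 - 1 and time matching forces m = j, but T j = l1 ≠ l2 - 1
        have hm' : m = j := by omega
        rw [hm', hTj] at hc; omega
end

section
/- Diagonal lemma for staircase semi-standard tableaux: let T = (T₁,…,T_m) be a semi-standard tableau of staircase shape, meaning each column T_l is strictly increasing with values in {1,…,n+1}, the support of column l+1 starts exactly 2 lower than that of column l, and along each diagonal (left-to-right, top-to-bottom) the contents weakly decrease. If the box with content i and support s occurs in column j of T, then: (a) no other column of T contains a box with content i and support s; (b) if some column contains a box with content i−1 and support s+2, that column is column j; (c) if some column contains a box with content i+1 and support s−2, that column is column j. -/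
/-- Diagonal lemma for staircase semi-standard tableaux.  A tableau with `m` columns is
given by lengths `klen l`, support starts `sfun l`, and contents `T l j ∈ {1,…,n+1}`
for `1 ≤ j ≤ klen l`; the `j`-th box of column `l` has support `sfun l + 2(klen l − j)`.
Staircase shape: `sfun (l+1) = sfun l − 2` and the top of each column lies strictly below
the top of the previous one (`klen (l+1) ≤ klen l`); semi-standard: columns strictly
increase and contents weakly decrease along diagonals (left-to-right, top-to-bottom).
If the box with content `i` and support `s` occurs in column `l₀`, then:
(a) no other column contains a box with content `i` and support `s`;
(b) any box with content `i−1` and support `s+2` is in column `l₀`;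
(c) any box with content `i+1` and support `s−2` is in column `l₀`. -/
theorem stmt_16 (n m : ℕ) (klen : ℕ → ℕ) (sfun : ℕ → ℤ) (T : ℕ → ℕ → ℕ)
    (hm : 1 ≤ m)
    (hk : ∀ l, 1 ≤ l → l ≤ m → 1 ≤ klen l)
    (hrange : ∀ l j, 1 ≤ l → l ≤ m → 1 ≤ j → j ≤ klen l → 1 ≤ T l j ∧ T l j ≤ n + 1)
    (hinc : ∀ l j j', 1 ≤ l → l ≤ m → 1 ≤ j → j < j' → j' ≤ klen l → T l j < T l j')
    (hstair1 : ∀ l, 1 ≤ l → l + 1 ≤ m → sfun (l + 1) = sfun l - 2)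
    (hstair2 : ∀ l, 1 ≤ l → l + 1 ≤ m → klen (l + 1) ≤ klen l)
    (hdiag : ∀ l j j', 1 ≤ l → l + 1 ≤ m → 1 ≤ j → j ≤ klen l → 1 ≤ j' → j' ≤ klen (l + 1) →
      sfun (l + 1) + 2 * ((klen (l + 1) : ℤ) - (j' : ℤ)) =
        sfun l + 2 * ((klen l : ℤ) - (j : ℤ)) - 2 →
      T (l + 1) j' ≤ T l j)
    (i : ℕ) (s : ℤ) (l0 j0 : ℕ)
    (hl01 : 1 ≤ l0) (hl0m : l0 ≤ m) (hj01 : 1 ≤ j0) (hj0k : j0 ≤ klen l0)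
    (hcontent : T l0 j0 = i) (hsupp : sfun l0 + 2 * ((klen l0 : ℤ) - (j0 : ℤ)) = s) :
    (∀ l j, 1 ≤ l → l ≤ m → 1 ≤ j → j ≤ klen l →
        T l j = i → sfun l + 2 * ((klen l : ℤ) - (j : ℤ)) = s → l = l0) ∧
    (∀ l j, 1 ≤ l → l ≤ m → 1 ≤ j → j ≤ klen l →
        T l j = i - 1 → sfun l + 2 * ((klen l : ℤ) - (j : ℤ)) = s + 2 → l = l0) ∧
    (∀ l j, 1 ≤ l → l ≤ m → 1 ≤ j → j ≤ klen l →
        T l j = i + 1 → sfun l + 2 * ((klen l : ℤ) - (j : ℤ)) = s - 2 → l = l0) := by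
  have chain : ∀ l l', 1 ≤ l → l ≤ l' → l' ≤ m → ∀ j', 1 ≤ j' → j' ≤ klen l' →
      ∃ j, 1 ≤ j ∧ j ≤ klen l ∧
        sfun l + 2 * ((klen l : ℤ) - (j : ℤ)) =
          sfun l' + 2 * ((klen l' : ℤ) - (j' : ℤ)) + 2 * ((l' : ℤ) - (l : ℤ)) ∧
        T l' j' ≤ T l j := by
    intro l l' hl1 hll'
    induction l', hll' using Nat.le_induction with
    | base =>
      intro _ j' h1 h2
      exact ⟨j', h1, h2, by ring, le_refl _⟩
    | succ l' hll' ih =>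
      intro hl'm j' h1 h2
      have hl'1 : 1 ≤ l' := le_trans hl1 hll'
      have hk2 := hstair2 l' hl'1 (by omega)
      have hs2 := hstair1 l' hl'1 (by omega)
      set j'' := klen l' - klen (l' + 1) + j' with hj''
      have hj''1 : 1 ≤ j'' := by omega
      have hj''k : j'' ≤ klen l' := by omega
      have hcast : (j'' : ℤ) = (klen l' : ℤ) - (klen (l' + 1) : ℤ) + (j' : ℤ) := by
        rw [hj'']; push_cast; omega
      have hsup : sfun (l' + 1) + 2 * ((klen (l' + 1) : ℤ) - (j' : ℤ)) =
          sfun l' + 2 * ((klen l' : ℤ) - (j'' : ℤ)) - 2 := by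
        rw [hcast, hs2]; ring
      have hT := hdiag l' j'' j' hl'1 (by omega) hj''1 hj''k h1 h2 hsup
      obtain ⟨j, hj1, hjk, hjs, hjT⟩ := ih (by omega) j'' hj''1 hj''k
      refine ⟨j, hj1, hjk, ?_, le_trans hT hjT⟩
      rw [hjs, hcast, hs2]; push_cast; ring
  have twostep : ∀ l j1 j2, 1 ≤ l → l ≤ m → 1 ≤ j1 → j1 + 2 ≤ j2 → j2 ≤ klen l →
      T l j1 + 2 ≤ T l j2 := by
    intro l j1 j2 h1 h2 h3 h4 h5
    have a := hinc l j1 (j1 + 1) h1 h2 h3 (by omega) (by omega)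
    have b := hinc l (j1 + 1) j2 h1 h2 (by omega) (by omega) h5
    omega
  have hi1 : 1 ≤ i := by
    have := hrange l0 j0 hl01 hl0m hj01 hj0k; omega
  refine ⟨?_, ?_, ?_⟩
  · intro l j h1 h2 h3 h4 hTi hP
    rcases lt_trichotomy l l0 with hlt | heq | hgt
    · obtain ⟨jc, hc1, hck, hcs, hcT⟩ := chain l l0 h1 (le_of_lt hlt) hl0m j0 hj01 hj0k
      have hjlt : jc < j := by omega
      have := hinc l jc j h1 h2 hc1 hjlt h4
      omega
    · exact heq
    · exfalso
      obtain ⟨jc, hc1, hck, hcs, hcT⟩ := chain l0 l hl01 (le_of_lt hgt) h2 j h3 h4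
      have hjlt : jc < j0 := by omega
      have := hinc l0 jc j0 hl01 hl0m hc1 hjlt hj0k
      omega
  · intro l j h1 h2 h3 h4 hTi hP
    have hTlj := hrange l j h1 h2 h3 h4
    rcases lt_trichotomy l l0 with hlt | heq | hgt
    · exfalso
      obtain ⟨jc, hc1, hck, hcs, hcT⟩ := chain l l0 h1 (le_of_lt hlt) hl0m j0 hj01 hj0k
      have hjle : jc ≤ j := by omega
      rcases eq_or_lt_of_le hjle with he | hl
      · subst he; omega
      · have := hinc l jc j h1 h2 hc1 hl h4
        omega
    · exact heq
    · exfalso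
      obtain ⟨jc, hc1, hck, hcs, hcT⟩ := chain l0 l hl01 (le_of_lt hgt) h2 j h3 h4
      have hjle : jc + 2 ≤ j0 := by omega
      have := twostep l0 jc j0 hl01 hl0m hc1 hjle hj0k
      omega
  · intro l j h1 h2 h3 h4 hTi hP
    rcases lt_trichotomy l l0 with hlt | heq | hgt
    · exfalso
      obtain ⟨jc, hc1, hck, hcs, hcT⟩ := chain l l0 h1 (le_of_lt hlt) hl0m j0 hj01 hj0k
      have hjle : jc + 2 ≤ j := by omega
      have := twostep l jc j h1 h2 hc1 hjle h4
      omega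
    · exact heq
    · exfalso
      obtain ⟨jc, hc1, hck, hcs, hcT⟩ := chain l0 l hl01 (le_of_lt hgt) h2 j h3 h4
      have hjle : jc ≤ j0 := by omega
      rcases eq_or_lt_of_le hjle with he | hl
      · subst he; omega
      · have := hinc l0 jc j0 hl01 hl0m hc1 hl hj0k
        omega
end

section
/- q-factorization for sl₂: let q ∈ ℂ× not be a root of unity and let ω be a dominant ℓ-weight for U_q(sl₂-hat), i.e., a polynomial ω(u) = ∏_j (1 − a_j u) with a_j ∈ ℂ×. Then there exist unique (up to reordering) m ≥ 0, a₁,…,a_m ∈ ℂ× and r₁,…,r_m ∈ ℤ_{≥1} such that ω = ∏_{j=1}^m ω_{a_j,r_j}, where ω_{a,r}(u) = ∏_{l=0}^{r-1}(1 − a q^{r−1−2l} u), and for all j ≠ l and all 0 ≤ p < min{r_j, r_l}, a_j/a_l ≠ q^{±(r_j + r_l − 2p)}. -/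
/-- The q-string of length `r` centered at `a`: the multiset
`{aq^{r−1}, aq^{r−3}, …, aq^{1−r}}` of roots of `ω_{a,r}`. -/
noncomputable def qstring (q a : ℂˣ) (r : ℕ) : Multiset ℂˣ :=
  (Multiset.range r).map fun l => a * q ^ ((r : ℤ) - 1 - 2 * (l : ℤ))

/-- The non-resonance condition between two q-strings `(a,r)` and `(b,s)`:
`a/b ≠ q^{±(r+s−2p)}` for all `0 ≤ p < min{r,s}`. -/
def nonres (q : ℂˣ) (x y : ℂˣ × ℕ) : Prop :=
  ∀ p : ℕ, p < min x.2 y.2 →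
    x.1 / y.1 ≠ q ^ ((x.2 : ℤ) + (y.2 : ℤ) - 2 * (p : ℤ)) ∧
    x.1 / y.1 ≠ (q ^ ((x.2 : ℤ) + (y.2 : ℤ) - 2 * (p : ℤ)))⁻¹

/-- `L` is a q-factorization of the dominant ℓ-weight with root multiset `S`: the strings
have positive lengths, their union is `S`, and distinct members are non-resonant. -/
def IsQFactorization (q : ℂˣ) (S : Multiset ℂˣ) (L : List (ℂˣ × ℕ)) : Prop :=
  (∀ x ∈ L, 1 ≤ x.2) ∧ (L.map fun x => qstring q x.1 x.2).sum = S ∧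
    ∀ i j : Fin L.length, i ≠ j → nonres q (L.get i) (L.get j)

section Helpers

variable {q : ℂˣ}

lemma qinj (hq : ∀ k : ℕ, 1 ≤ k → q ^ k ≠ 1) : Function.Injective fun n : ℤ => q ^ n := by
  have h1 : ¬ IsOfFinOrder q := by
    rw [isOfFinOrder_iff_pow_eq_one]
    rintro ⟨n, hn, h⟩; exact hq n hn h
  exact injective_zpow_iff_not_isOfFinOrder.mpr h1

lemma qmul (c : ℂˣ) (m n : ℤ) : c * q ^ m * q ^ n = c * q ^ (m + n) := by
  rw [mul_assoc, ← zpow_add]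

lemma qeq (hq : ∀ k : ℕ, 1 ≤ k → q ^ k ≠ 1) {c : ℂˣ} {m n : ℤ} :
    c * q ^ m = c * q ^ n ↔ m = n :=
  ⟨fun h => qinj hq (mul_left_cancel h), fun h => by rw [h]⟩

lemma qdiv (c : ℂˣ) (m n : ℤ) : (c * q ^ m) / (c * q ^ n) = q ^ (m - n) := by
  rw [mul_div_mul_left_eq_div, div_eq_mul_inv, ← zpow_neg, ← zpow_add, sub_eq_add_neg]

lemma qstring_eq (q a : ℂˣ) (r : ℕ) :
    qstring q a r = (Multiset.range r).map (fun l : ℕ => a * q ^ ((r : ℤ) - 1 - 2 * (l : ℤ))) := by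
  unfold qstring
  simp [bind_pure_comp, Multiset.map_map]

lemma mem_qstring {a x : ℂˣ} {r : ℕ} :
    x ∈ qstring q a r ↔ ∃ l : ℕ, l < r ∧ x = a * q ^ ((r : ℤ) - 1 - 2 * (l : ℤ)) := by
  rw [qstring_eq]
  simp only [Multiset.mem_map, Multiset.mem_range]
  constructor
  · rintro ⟨l, hl, h⟩; exact ⟨l, hl, h.symm⟩
  · rintro ⟨l, hl, h⟩; exact ⟨l, hl, h.symm⟩

lemma card_qstring (a : ℂˣ) (r : ℕ) : (qstring q a r).card = r := by
  rw [qstring_eq]; simp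

lemma le_sum_of_mem {α β : Type*} (f : α → Multiset β) {l : List α} {x : α} (h : x ∈ l) :
    f x ≤ (l.map f).sum := by
  induction l with
  | nil => simp at h
  | cons y t ih =>
    rcases List.mem_cons.mp h with h | h
    · subst h; simp only [List.map_cons, List.sum_cons]; exact le_add_right le_rfl
    · simp only [List.map_cons, List.sum_cons]; exact le_add_left (ih h)

lemma mem_listsum {α β : Type*} {f : α → Multiset β} {l : List α} {b : β} :
    b ∈ (l.map f).sum ↔ ∃ x ∈ l, b ∈ f x := by
  induction l with
  | nil => simp
  | cons y t ih => simp [List.map_cons, List.sum_cons, Multiset.mem_add, ih]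

lemma div_eq_inv_comm (a b u : ℂˣ) : a / b = u⁻¹ ↔ b / a = u := by
  rw [← inv_div b a, inv_inj]

lemma nonres_iff (x y : ℂˣ × ℕ) : nonres q x y ↔ ∀ p : ℕ, p < min x.2 y.2 →
    x.1 / y.1 ≠ q ^ ((x.2 : ℤ) + (y.2 : ℤ) - 2 * (p : ℤ)) ∧
    y.1 / x.1 ≠ q ^ ((x.2 : ℤ) + (y.2 : ℤ) - 2 * (p : ℤ)) := by
  unfold nonres
  refine forall_congr' fun p => imp_congr_right fun _ => and_congr_right fun _ => ?_
  rw [not_iff_not, div_eq_inv_comm]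

lemma nonres_symm {x y : ℂˣ × ℕ} (h : nonres q x y) : nonres q y x := by
  rw [nonres_iff] at h ⊢
  intro p hp
  rw [min_comm] at hp
  obtain ⟨h1, h2⟩ := h p hp
  rw [add_comm (y.2 : ℤ) (x.2 : ℤ)]
  exact ⟨h2, h1⟩

lemma fact3_iff (L : List (ℂˣ × ℕ)) :
    (∀ i j : Fin L.length, i ≠ j → nonres q (L.get i) (L.get j)) ↔ L.Pairwise (nonres q) := by
  rw [List.pairwise_iff_get]
  constructor
  · intro H i j hij; exact H i j (Fin.ne_of_lt hij)
  · intro H i j hij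
    rcases lt_or_gt_of_ne hij with h | h
    · exact H i j h
    · exact nonres_symm (H j i h)

end Helpers

section Main

variable {q : ℂˣ}

lemma div_helper1 {u b t : ℂˣ} (h : u / b = t) : b = u * t⁻¹ := by
  rw [← h, inv_div, mul_comm, div_eq_mul_inv, inv_mul_cancel_right]

lemma div_helper2 {u b t : ℂˣ} (h : b / u = t) : b = u * t := by
  rw [← h, mul_comm, div_eq_mul_inv, inv_mul_cancel_right]

lemma compat (hq : ∀ k : ℕ, 1 ≤ k → q ^ k ≠ 1) {S : Multiset ℂˣ} {c : ℂˣ} {r : ℕ}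
    (hc2 : c * q ^ (2:ℤ) ∉ S) (hcr : c * q ^ (-2 * (r:ℤ)) ∉ S)
    {b : ℂˣ} {s : ℕ} (hsub : ∀ ρ ∈ qstring q b s, ρ ∈ S) :
    nonres q (c * q ^ (1 - (r:ℤ)), r) (b, s) := by
  intro p hp
  simp only at hp ⊢
  obtain ⟨hpr, hps⟩ := lt_min_iff.mp hp
  constructor
  · intro hA
    have hb : b = c * q ^ ((1 - (r:ℤ)) + -((r:ℤ) + (s:ℤ) - 2 * (p:ℤ))) := by
      rw [← qmul, zpow_neg]
      exact div_helper1 hA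
    apply hcr
    apply hsub
    rw [mem_qstring]
    refine ⟨p, hps, ?_⟩
    rw [hb, qmul, qeq hq]
    push_cast
    ring
  · intro hB
    rw [div_eq_inv_comm] at hB
    have hb : b = c * q ^ ((1 - (r:ℤ)) + ((r:ℤ) + (s:ℤ) - 2 * (p:ℤ))) := by
      rw [← qmul]
      exact div_helper2 hB
    apply hc2
    apply hsub
    rw [mem_qstring]
    refine ⟨s - 1 - p, by omega, ?_⟩
    rw [hb, qmul, qeq hq]
    omega

lemma get_mem' {α : Type*} (L : List α) (i : Fin L.length) : L.get i ∈ L :=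
  List.get_mem L i

lemma key (hq : ∀ k : ℕ, 1 ≤ k → q ^ k ≠ 1) {S : Multiset ℂˣ} {c : ℂˣ} {r : ℕ}
    (hc2 : c * q ^ (2:ℤ) ∉ S)
    (hmem : ∀ l : ℕ, l < r → c * q ^ (-2 * (l:ℤ)) ∈ S)
    (hcr : c * q ^ (-2 * (r:ℤ)) ∉ S) (hr : 1 ≤ r)
    {L : List (ℂˣ × ℕ)} (hF : IsQFactorization q S L) :
    (c * q ^ (1 - (r:ℤ)), r) ∈ L := by
  classical
  obtain ⟨hlen, hsum, hnr⟩ := hF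
  have hcS : c ∈ S := by
    have := hmem 0 hr
    simpa using this
  have hroots : ∀ i : Fin L.length, ∀ ρ ∈ qstring q (L.get i).1 (L.get i).2, ρ ∈ S := by
    intro i ρ hρ
    have h1 : qstring q (L.get i).1 (L.get i).2 ≤ (L.map fun x => qstring q x.1 x.2).sum :=
      le_sum_of_mem _ (get_mem' L i)
    rw [hsum] at h1
    exact Multiset.mem_of_le h1 hρ
  -- every string containing c has top c
  have htopall : ∀ j : Fin L.length, c ∈ qstring q (L.get j).1 (L.get j).2 →
      (L.get j).1 = c * q ^ (1 - ((L.get j).2 : ℤ)) := by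
    intro j hj
    rw [mem_qstring] at hj
    obtain ⟨l, hl, hcl⟩ := hj
    rcases Nat.eq_zero_or_pos l with h0 | h1
    · subst h0
      rw [hcl, qmul]
      nth_rewrite 1 [show (L.get j).1 = (L.get j).1 * q ^ (0:ℤ) by rw [zpow_zero, mul_one]]
      rw [qeq hq]
      push_cast
      ring
    · exfalso
      apply hc2
      apply hroots j
      rw [mem_qstring]
      refine ⟨l - 1, by omega, ?_⟩
      rw [hcl, qmul, qeq hq]
      omega
  -- every string containing c has length ≤ r
  have hlenall : ∀ j : Fin L.length, c ∈ qstring q (L.get j).1 (L.get j).2 →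
      (L.get j).2 ≤ r := by
    intro j hj
    by_contra hgt
    push_neg at hgt
    apply hcr
    apply hroots j
    rw [mem_qstring, htopall j hj]
    refine ⟨r, hgt, ?_⟩
    rw [qmul, qeq hq]
    omega
  -- choose a string containing c of maximal length
  have hex : ∃ i : Fin L.length, c ∈ qstring q (L.get i).1 (L.get i).2 := by
    rw [← hsum] at hcS
    rw [mem_listsum] at hcS
    obtain ⟨x, hxL, hcx⟩ := hcS
    obtain ⟨i, hi⟩ := List.mem_iff_get.mp hxL
    exact ⟨i, by rw [hi]; exact hcx⟩
  obtain ⟨i0, hi0⟩ := hex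
  obtain ⟨i, hiP', himax'⟩ := Finset.exists_max_image
    (Finset.univ.filter fun i : Fin L.length => c ∈ qstring q (L.get i).1 (L.get i).2)
    (fun i => (L.get i).2) ⟨i0, Finset.mem_filter.mpr ⟨Finset.mem_univ _, hi0⟩⟩
  have hiP : c ∈ qstring q (L.get i).1 (L.get i).2 := (Finset.mem_filter.mp hiP').2
  have himax : ∀ j : Fin L.length, c ∈ qstring q (L.get j).1 (L.get j).2 →
      (L.get j).2 ≤ (L.get i).2 := fun j hj =>
    himax' j (Finset.mem_filter.mpr ⟨Finset.mem_univ _, hj⟩)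
  have htop : (L.get i).1 = c * q ^ (1 - ((L.get i).2:ℤ)) := htopall i hiP
  have ht1 : 1 ≤ (L.get i).2 := hlen _ (get_mem' L i)
  have htr : (L.get i).2 ≤ r := hlenall i hiP
  rcases eq_or_lt_of_le htr with heq | hlt
  · have heq2 : L.get i = (c * q ^ (1 - (r:ℤ)), r) := by
      rw [Prod.ext_iff]
      exact ⟨by rw [htop, heq], heq⟩
    rw [← heq2]
    exact get_mem' L i
  · exfalso
    -- c * q^(-2t) ∈ S where t = (L.get i).2; find the string containing it
    have hc' : c * q ^ (-2 * (((L.get i).2):ℤ)) ∈ S := hmem _ hlt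
    rw [← hsum, mem_listsum] at hc'
    obtain ⟨y, hyL, hcy⟩ := hc'
    obtain ⟨j, hj⟩ := List.mem_iff_get.mp hyL
    rw [← hj] at hcy
    rw [mem_qstring] at hcy
    obtain ⟨l', hl's, hcl'⟩ := hcy
    have hs1 : 1 ≤ (L.get j).2 := hlen _ (get_mem' L j)
    -- value of the center of string j
    have hBval : (L.get j).1
        = c * q ^ (2 * (l':ℤ) - 2 * (((L.get i).2):ℤ) + 1 - (((L.get j).2):ℤ)) := by
      have h2 : (L.get j).1 * q ^ ((((L.get j).2):ℤ) - 1 - 2 * (l':ℤ))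
          = (c * q ^ (2 * (l':ℤ) - 2 * (((L.get i).2):ℤ) + 1 - (((L.get j).2):ℤ)))
            * q ^ ((((L.get j).2):ℤ) - 1 - 2 * (l':ℤ)) := by
        rw [← hcl', qmul, qeq hq]
        ring
      exact mul_right_cancel h2
    -- l' ≤ t
    have hl't : l' ≤ (L.get i).2 := by
      by_contra hgt
      push_neg at hgt
      apply hc2
      apply hroots j
      rw [mem_qstring, hBval]
      refine ⟨l' - (L.get i).2 - 1, by omega, ?_⟩
      rw [qmul, qeq hq]
      omega
    -- l' ≠ t
    have hl'ne : l' ≠ (L.get i).2 := by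
      intro hlt'
      have hcj : c ∈ qstring q (L.get j).1 (L.get j).2 := by
        rw [mem_qstring, hBval]
        refine ⟨0, by omega, ?_⟩
        rw [qmul]
        nth_rewrite 1 [show c = c * q ^ (0:ℤ) by rw [zpow_zero, mul_one]]
        rw [qeq hq]
        omega
      have := himax j hcj
      omega
    have hl'lt : l' < (L.get i).2 := lt_of_le_of_ne hl't hl'ne
    -- i ≠ j
    have hij : i ≠ j := by
      intro h
      rw [← h] at hBval
      rw [htop, qeq hq] at hBval
      omega
    -- resonance: contradiction with non-resonance
    have hres : (L.get i).1 / (L.get j).1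
        = q ^ ((((L.get i).2) : ℤ) + (((L.get j).2) : ℤ) - 2 * (l' : ℤ)) := by
      rw [htop, hBval, qdiv]
      congr 1
      push_cast
      ring
    exact (hnr i j hij l' (lt_min hl'lt hl's)).1 hres

/-- q-factorization for sl₂: every dominant ℓ-weight (identified with the finite multiset
`S` of inverse roots of its Drinfeld polynomial) admits a q-factorization into q-strings
satisfying the non-resonance condition, unique up to reordering. -/
theorem stmt_17 (q : ℂˣ) (hq : ∀ k : ℕ, 1 ≤ k → q ^ k ≠ 1) (S : Multiset ℂˣ) :
    ∃ L : List (ℂˣ × ℕ), IsQFactorization q S L ∧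
      ∀ L' : List (ℂˣ × ℕ), IsQFactorization q S L' → L'.Perm L := by
  classical
  induction S using Multiset.strongInductionOn with
  | _ S IH =>
  by_cases hS0 : S = 0
  · subst hS0
    refine ⟨[], ⟨by simp, by simp, fun i j _ => absurd i.isLt (by simp)⟩, ?_⟩
    intro L' hL'
    have hnil : L' = [] := by
      cases L' with
      | nil => rfl
      | cons x t =>
        exfalso
        obtain ⟨hlen, hsum, -⟩ := hL'
        have hx : qstring q x.1 x.2 ≤ (List.map (fun x => qstring q x.1 x.2) (x::t)).sum :=
          le_sum_of_mem _ List.mem_cons_self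
        rw [hsum] at hx
        have h0 : qstring q x.1 x.2 = 0 := Multiset.le_zero.mp hx
        have hcard := congrArg Multiset.card h0
        rw [card_qstring] at hcard
        have := hlen x List.mem_cons_self
        simp at hcard
        omega
    rw [hnil]
  · obtain ⟨c₀, hc₀⟩ := Multiset.exists_mem_of_ne_zero hS0
    have hfin : {x : ℂˣ | x ∈ S}.Finite := Multiset.finite_toSet S
    -- find the top of the component of c₀
    have hA : {k : ℤ | c₀ * q ^ (2*k) ∈ S}.Finite := by
      have heq : {k : ℤ | c₀ * q ^ (2*k) ∈ S} = (fun k : ℤ => c₀ * q ^ (2*k)) ⁻¹' {x | x ∈ S} := rfl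
      rw [heq]
      refine Set.Finite.preimage (Function.Injective.injOn ?_) hfin
      intro m n h
      have := (qeq hq).mp h
      omega
    have hA0 : (0:ℤ) ∈ hA.toFinset := by
      rw [Set.Finite.mem_toFinset]
      simpa using hc₀
    set kmax := hA.toFinset.max' ⟨0, hA0⟩ with hkmax
    have hkmem : c₀ * q ^ (2*kmax) ∈ S := by
      have := hA.toFinset.max'_mem ⟨0, hA0⟩
      rw [Set.Finite.mem_toFinset] at this
      exact this
    set c := c₀ * q ^ (2*kmax) with hc
    have hc2 : c * q ^ (2:ℤ) ∉ S := by
      intro h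
      have h1 : kmax + 1 ∈ hA.toFinset := by
        rw [Set.Finite.mem_toFinset]
        show c₀ * q ^ (2*(kmax+1)) ∈ S
        have : c₀ * q ^ (2*(kmax+1)) = c * q ^ (2:ℤ) := by
          rw [hc, qmul, qeq hq]; ring
        rw [this]; exact h
      have := hA.toFinset.le_max' _ h1
      rw [← hkmax] at this
      omega
    -- find the length r of the component
    have hBne : ∃ n : ℕ, c * q ^ (-2*(n:ℤ)) ∉ S := by
      by_contra hall
      push_neg at hall
      have ginj : Function.Injective (fun n : ℕ => c * q ^ (-2*(n:ℤ))) := by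
        intro m n h
        have := (qeq hq).mp h
        omega
      exact Set.infinite_range_of_injective ginj
        (hfin.subset (by rintro x ⟨n, rfl⟩; exact hall n))
    set r := Nat.find hBne with hrdef
    have hcr : c * q ^ (-2*(r:ℤ)) ∉ S := Nat.find_spec hBne
    have hmem : ∀ l : ℕ, l < r → c * q ^ (-2*(l:ℤ)) ∈ S := by
      intro l hl
      exact not_not.mp (Nat.find_min hBne hl)
    have hr : 1 ≤ r := by
      rcases Nat.eq_zero_or_pos r with h0 | h1
      · exfalso; apply hcr; rw [h0]; simpa using hkmem
      · exact h1
    -- the top string T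
    set T := qstring q (c * q ^ (1 - (r:ℤ))) r with hT
    have hTroot : ∀ x ∈ T, x ∈ S := by
      intro x hx
      rw [hT, mem_qstring] at hx
      obtain ⟨l, hl, hxe⟩ := hx
      have h1 : x = c * q ^ (-2*(l:ℤ)) := by
        rw [hxe, qmul]
        congr 1
        push_cast
        ring
      rw [h1]
      exact hmem l hl
    have hTnodup : T.Nodup := by
      rw [hT, qstring_eq]
      refine Multiset.Nodup.map_on ?_ (Multiset.nodup_range r)
      intro l1 _ l2 _ he
      have := (qeq hq).mp he
      omega
    have hTS : T ≤ S := Multiset.le_iff_count.mpr fun x => by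
      by_cases hx : x ∈ T
      · rw [Multiset.count_eq_one_of_mem hTnodup hx]
        exact Multiset.one_le_count_iff_mem.mpr (hTroot x hx)
      · rw [Multiset.count_eq_zero_of_notMem hx]
        exact Nat.zero_le _
    have hcardT : T.card = r := by rw [hT]; exact card_qstring _ _
    have hlt : S - T < S := by
      have hc1 : (S - T).card < S.card := by
        rw [Multiset.card_sub hTS, hcardT]
        have h2 : 0 < S.card := Multiset.card_pos.mpr hS0
        have h3 : T.card ≤ S.card := Multiset.card_le_card hTS
        rw [hcardT] at h3
        omega
      exact lt_of_le_of_ne tsub_le_self fun h => by rw [h] at hc1; exact lt_irrefl _ hc1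
    obtain ⟨L₀, hL₀, huniq₀⟩ := IH (S - T) hlt
    refine ⟨(c * q ^ (1 - (r:ℤ)), r) :: L₀, ⟨?_, ?_, ?_⟩, ?_⟩
    · intro x hx
      rcases List.mem_cons.mp hx with h | h
      · rw [h]; exact hr
      · exact hL₀.1 x h
    · simp only [List.map_cons, List.sum_cons]
      rw [hL₀.2.1, ← hT]
      exact add_tsub_cancel_of_le hTS
    · rw [fact3_iff]
      refine List.Pairwise.cons ?_ ((fact3_iff L₀).mp hL₀.2.2)
      intro y hy
      have hysub : ∀ ρ ∈ qstring q y.1 y.2, ρ ∈ S := by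
        intro ρ hρ
        have h1 : qstring q y.1 y.2 ≤ (L₀.map fun x => qstring q x.1 x.2).sum :=
          le_sum_of_mem _ hy
        rw [hL₀.2.1] at h1
        exact Multiset.mem_of_le (le_trans h1 tsub_le_self) hρ
      have := compat hq hc2 hcr hysub
      simpa using this
    · intro L' hL'
      have hmemL' := key hq hc2 hmem hcr hr hL'
      obtain ⟨L₁, L₂, hsplit⟩ := List.append_of_mem hmemL'
      subst hsplit
      have hF2 : IsQFactorization q (S - T) (L₁ ++ L₂) := by
        obtain ⟨hlen2, hsum2, hnr2⟩ := hL'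
        refine ⟨?_, ?_, ?_⟩
        · intro x hx
          apply hlen2
          rcases List.mem_append.mp hx with h | h
          · exact List.mem_append.mpr (Or.inl h)
          · exact List.mem_append.mpr (Or.inr (List.mem_cons_of_mem _ h))
        · have h4 : (List.map (fun x => qstring q x.1 x.2) (L₁ ++ (c * q ^ (1 - (r:ℤ)), r) :: L₂)).sum
              = T + (List.map (fun x => qstring q x.1 x.2) (L₁ ++ L₂)).sum := by
            simp only [List.map_append, List.sum_append, List.map_cons, List.sum_cons]
            rw [← hT]
            exact add_left_comm _ _ _
          rw [h4] at hsum2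
          rw [← hsum2, add_tsub_cancel_left]
        · rw [fact3_iff]
          have hpw := (fact3_iff _).mp hnr2
          exact hpw.sublist ((L₂.sublist_cons_self _).append_left L₁)
      have hperm := huniq₀ (L₁ ++ L₂) hF2
      exact List.perm_middle.trans (hperm.cons _)

end Main
end
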